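/- (Monotone modified Newton step.) Suppose x ∈ ℝⁿ satisfies F(x) ≤ 0 entrywise, 0 ≤ x entrywise, and eᵀx ≤ 1. Then for any z ∈ ℝⁿ with 0 ≤ z ≤ x entrywise, F'_z is invertible, and the vector y = x − (F'_z)⁻¹F(x) satisfies: (a) F(y) ≤ 0 entrywise; (b) 0 ≤ x ≤ y entrywise and eᵀy ≤ 1. -/

import Mathlib

open Matrix BigOperators Finset Filter

noncomputable section

/-- Kronecker product of two vectors: `(u ⊗ w)_{(i,j)} = u_i w_j`. -/
def kron {n : ℕ} (u w : Fin n → ℝ) : Fin n × Fin n → ℝ := fun p => u p.1 * w p.2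

/-- `u ⊗ I` : the `n² × n` Kronecker product of a vector with the identity,
so that `(u ⊗ I) w = u ⊗ w`. -/
def kronVecId {n : ℕ} (u : Fin n → ℝ) : Matrix (Fin n × Fin n) (Fin n) ℝ :=
  Matrix.of fun p k => u p.1 * (if p.2 = k then (1 : ℝ) else 0)

/-- `I ⊗ u` : the `n² × n` Kronecker product of the identity with a vector,
so that `(I ⊗ u) w = w ⊗ u`. -/
def idKronVec {n : ℕ} (u : Fin n → ℝ) : Matrix (Fin n × Fin n) (Fin n) ℝ :=
  Matrix.of fun p k => (if p.1 = k then (1 : ℝ) else 0) * u p.2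

/-- `F(x) = x − α R (x ⊗ x) − (1 − α) v`. -/
def Fmap {n : ℕ} (α : ℝ) (R : Matrix (Fin n) (Fin n × Fin n) ℝ) (v : Fin n → ℝ)
    (x : Fin n → ℝ) : Fin n → ℝ :=
  x - α • R.mulVec (kron x x) - (1 - α) • v

/-- `F'ₓ = I − α R (x ⊗ I + I ⊗ x)`. -/
def Fprime {n : ℕ} (α : ℝ) (R : Matrix (Fin n) (Fin n × Fin n) ℝ)
    (x : Fin n → ℝ) : Matrix (Fin n) (Fin n) ℝ :=
  1 - α • (R * (kronVecId x + idKronVec x))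

section Aux

attribute [local instance] Matrix.linftyOpNormedRing Matrix.linftyOpNormedAlgebra
  Matrix.linftyOpNormedSpace

lemma norm_le_of_rows {n : ℕ} (B : Matrix (Fin n) (Fin n) ℝ) (c : ℝ) (hc : 0 ≤ c)
    (h : ∀ i, ∑ j, |B i j| ≤ c) : ‖B‖ ≤ c := by
  have h1 : ‖B‖₊ ≤ ⟨c, hc⟩ := by
    rw [Matrix.linfty_opNNNorm_def]
    refine Finset.sup_le fun i _ => ?_
    refine NNReal.coe_le_coe.mp ?_
    push_cast
    have h' : ∑ j, ‖B i j‖ ≤ c := by simpa [Real.norm_eq_abs] using h i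
    exact h'
  exact_mod_cast h1

lemma pow_entry_nonneg {n : ℕ} (B : Matrix (Fin n) (Fin n) ℝ) (hB0 : ∀ i j, 0 ≤ B i j)
    (k : ℕ) : ∀ i j, 0 ≤ (B ^ k) i j := by
  induction k with
  | zero => intro i j; simp [Matrix.one_apply]; split <;> norm_num
  | succ k ih =>
    intro i j
    rw [pow_succ, Matrix.mul_apply]
    exact Finset.sum_nonneg fun l _ => mul_nonneg (ih i l) (hB0 l j)

lemma oneSub_inv_nonneg {n : ℕ} (B : Matrix (Fin n) (Fin n) ℝ) (hB : ‖B‖ < 1)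
    (hB0 : ∀ i j, 0 ≤ B i j) : ∀ i j, 0 ≤ (1 - B)⁻¹ i j := by
  intro i j
  have hinv : (1 - B)⁻¹ = ∑' k : ℕ, B ^ k :=
    Matrix.inv_eq_left_inv (geom_series_mul_neg B hB)
  rw [hinv]
  let E : Matrix (Fin n) (Fin n) ℝ →ₗ[ℝ] ℝ :=
    { toFun := fun A => A i j
      map_add' := fun A C => rfl
      map_smul' := fun r A => rfl }
  have hE : Continuous E := E.continuous_of_finiteDimensional
  have hsum : Summable (fun k : ℕ => B ^ k) := summable_geometric_of_norm_lt_one hB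
  have : (∑' k : ℕ, B ^ k) i j = ∑' k : ℕ, (B ^ k) i j :=
    (⟨E, hE⟩ : Matrix (Fin n) (Fin n) ℝ →L[ℝ] ℝ).map_tsum hsum
  rw [this]
  exact tsum_nonneg fun k => pow_entry_nonneg B hB0 k i j

lemma unit_and_inv_nonneg {n : ℕ} (A B : Matrix (Fin n) (Fin n) ℝ) (hAB : Aᵀ = 1 - B)
    (hB0 : ∀ i j, 0 ≤ B i j) (c : ℝ) (hc : 0 ≤ c) (hc1 : c < 1)
    (hrow : ∀ i, ∑ j, B i j ≤ c) :
    IsUnit A ∧ ∀ i j, 0 ≤ A⁻¹ i j := by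
  have hB : ‖B‖ < 1 := by
    refine lt_of_le_of_lt (norm_le_of_rows B c hc fun i => ?_) hc1
    calc ∑ j, |B i j| = ∑ j, B i j :=
          Finset.sum_congr rfl fun j _ => abs_of_nonneg (hB0 i j)
      _ ≤ c := hrow i
  have hUt : IsUnit Aᵀ := by rw [hAB]; exact isUnit_one_sub_of_norm_lt_one hB
  have hdet : IsUnit A.det := by
    have := (Matrix.isUnit_iff_isUnit_det _).mp hUt
    rwa [Matrix.det_transpose] at this
  refine ⟨(Matrix.isUnit_iff_isUnit_det _).mpr hdet, fun i j => ?_⟩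
  have h1 : (A⁻¹)ᵀ = (Aᵀ)⁻¹ := Matrix.transpose_nonsing_inv _
  have h2 : A⁻¹ i j = (Aᵀ)⁻¹ j i := by rw [← h1]; rfl
  rw [h2, hAB]
  exact oneSub_inv_nonneg B hB hB0 j i

end Aux

theorem stmt12 {n : ℕ} (hn : 1 ≤ n) (α : ℝ) (hα0 : 0 < α) (hα : α < 1 / 2)
    (R : Matrix (Fin n) (Fin n × Fin n) ℝ) (hR0 : ∀ i p, 0 ≤ R i p)
    (hRcol : ∀ p, ∑ i, R i p = 1)
    (v : Fin n → ℝ) (hv0 : 0 ≤ v) (hv1 : ∑ i, v i = 1)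
    (x : Fin n → ℝ) (hFx : Fmap α R v x ≤ 0) (hx0 : 0 ≤ x) (hx1 : ∑ i, x i ≤ 1)
    (z : Fin n → ℝ) (hz0 : 0 ≤ z) (hzx : z ≤ x)
    (y : Fin n → ℝ) (hy : y = x - (Fprime α R z)⁻¹.mulVec (Fmap α R v x)) :
    IsUnit (Fprime α R z) ∧
    Fmap α R v y ≤ 0 ∧ 0 ≤ x ∧ x ≤ y ∧ ∑ i, y i ≤ 1 := by
  classical
  set ζ := ∑ i, z i with hζdef
  set σ := ∑ i, x i with hσdef
  have hζ0 : 0 ≤ ζ := Finset.sum_nonneg fun i _ => hz0 i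
  have hζσ : ζ ≤ σ := Finset.sum_le_sum fun i _ => hzx i
  have hσ0 : 0 ≤ σ := Finset.sum_nonneg fun i _ => hx0 i
  -- the matrix K and M
  set K : Matrix (Fin n × Fin n) (Fin n) ℝ := kronVecId z + idKronVec z with hKdef
  set M : Matrix (Fin n) (Fin n) ℝ := α • (R * K) with hMdef
  have hA : Fprime α R z = 1 - M := rfl
  have hK0 : ∀ p k, 0 ≤ K p k := by
    intro p k
    simp only [hKdef, Matrix.add_apply, kronVecId, idKronVec, Matrix.of_apply]
    have := hz0 p.1
    have := hz0 p.2
    split <;> split <;> simp_all <;> positivity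
  have hM0 : ∀ i j, 0 ≤ M i j := by
    intro i j
    simp only [hMdef, Matrix.smul_apply, smul_eq_mul]
    refine mul_nonneg hα0.le ?_
    rw [Matrix.mul_apply]
    exact Finset.sum_nonneg fun p _ => mul_nonneg (hR0 i p) (hK0 p j)
  have hKcol : ∀ k, ∑ p, K p k = 2 * ζ := by
    intro k
    simp only [hKdef, Matrix.add_apply, kronVecId, idKronVec, Matrix.of_apply]
    rw [Fintype.sum_prod_type]
    have h2 : ∀ a : Fin n,
        (∑ b, (z a * (if b = k then (1:ℝ) else 0) + (if a = k then (1:ℝ) else 0) * z b))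
          = z a + (if a = k then ζ else 0) := by
      intro a
      rw [Finset.sum_add_distrib]
      have e1 : (∑ b, z a * if b = k then (1:ℝ) else 0) = z a := by
        rw [← Finset.mul_sum, Finset.sum_ite_eq' Finset.univ k]
        simp
      have e2 : (∑ b : Fin n, (if a = k then (1:ℝ) else 0) * z b) = if a = k then ζ else 0 := by
        split <;> simp [hζdef]
      rw [e1, e2]
    rw [Finset.sum_congr rfl fun a (_ : a ∈ Finset.univ) => h2 a, Finset.sum_add_distrib,
      Finset.sum_ite_eq' Finset.univ k]
    simp [hζdef]
    ring
  have hMcol : ∀ k, ∑ j, M j k = 2 * α * ζ := by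
    intro k
    simp only [hMdef, Matrix.smul_apply, smul_eq_mul, Matrix.mul_apply]
    rw [← Finset.mul_sum, Finset.sum_comm]
    have : ∑ p, ∑ j, R j p * K p k = ∑ p : Fin n × Fin n, K p k := by
      refine Finset.sum_congr rfl fun p _ => ?_
      rw [← Finset.sum_mul, hRcol p, one_mul]
    rw [this, hKcol k]
    ring
  -- invertibility via the transpose and the Neumann series
  have hAt : (Fprime α R z)ᵀ = 1 - Mᵀ := by
    rw [hA, Matrix.transpose_sub, Matrix.transpose_one]
  obtain ⟨hUnit, hInv0⟩ := unit_and_inv_nonneg (Fprime α R z) Mᵀ hAt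
    (fun i j => hM0 j i) (2 * α * ζ) (by positivity) (by nlinarith)
    (fun i => le_of_eq (hMcol i))
  have hdet : IsUnit (Fprime α R z).det := (Matrix.isUnit_iff_isUnit_det _).mp hUnit
  -- the step vector d
  set g : Fin n → ℝ := -(Fmap α R v x) with hgdef
  have hg0 : ∀ i, 0 ≤ g i := by
    intro i
    have h := hFx i
    simp only [Pi.zero_apply] at h
    simp only [hgdef, Pi.neg_apply]
    linarith
  set d : Fin n → ℝ := (Fprime α R z)⁻¹.mulVec g with hddef
  have hd0 : ∀ i, 0 ≤ d i := by
    intro i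
    simp only [hddef, Matrix.mulVec, dotProduct]
    exact Finset.sum_nonneg fun j _ => mul_nonneg (hInv0 i j) (hg0 j)
  have hyd : y = x + d := by
    rw [hy, hddef, hgdef, Matrix.mulVec_neg]
    funext i; simp; ring
  have hxy : x ≤ y := by
    intro i; rw [hyd]; simpa using hd0 i
  -- the key linear equation A d = g
  have hAd : (Fprime α R z).mulVec d = g := by
    rw [hddef, Matrix.mulVec_mulVec, Matrix.mul_nonsing_inv _ hdet, Matrix.one_mulVec]
  have hKd : K.mulVec d = kron z d + kron d z := by
    funext p
    simp only [hKdef, Matrix.mulVec, dotProduct, Matrix.add_apply, kronVecId, idKronVec,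
      Matrix.of_apply, Pi.add_apply, kron, add_mul, Finset.sum_add_distrib,
      ite_mul, mul_ite, mul_one, mul_zero, one_mul, zero_mul]
    rw [Finset.sum_ite_eq Finset.univ p.2, Finset.sum_ite_eq Finset.univ p.1]
    simp [mul_comm]
  have hAd' : ∀ i, d i - α * ((R.mulVec (kron z d)) i + (R.mulVec (kron d z)) i)
      = -(x i) + α * (R.mulVec (kron x x)) i + (1 - α) * v i := by
    intro i
    have h1 : (Fprime α R z).mulVec d = d - α • (R.mulVec (kron z d + kron d z)) := by
      rw [hA, Matrix.sub_mulVec, Matrix.one_mulVec, Matrix.smul_mulVec,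
        ← Matrix.mulVec_mulVec, hKd]
    have h2 := congrFun (h1 ▸ hAd) i
    simp only [Pi.sub_apply, Pi.smul_apply, smul_eq_mul, hgdef, Pi.neg_apply, Fmap,
      Matrix.mulVec_add, Pi.add_apply] at h2
    linarith [h2]
  -- part (a): F(y) ≤ 0
  have hkron_split : kron (x + d) (x + d) = kron x x + (kron x d + (kron d x + kron d d)) := by
    funext p
    simp only [kron, Pi.add_apply]
    ring
  have hFy : ∀ i, Fmap α R v y i
      = -(α * (R.mulVec (kron (x - z) d + (kron d (x - z) + kron d d))) i) := by
    intro i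
    have hx1d : kron (x - z) d = kron x d - kron z d := by funext p; simp [kron]; ring
    have hx2d : kron d (x - z) = kron d x - kron d z := by funext p; simp [kron]; ring
    simp only [Fmap, hkron_split, hx1d, hx2d, Matrix.mulVec_add, Matrix.mulVec_sub,
      Pi.sub_apply, Pi.add_apply, Pi.smul_apply, smul_eq_mul, hyd]
    linarith [hAd' i]
  have hFy0 : Fmap α R v y ≤ 0 := by
    intro i
    rw [hFy i]
    simp only [Pi.zero_apply, neg_nonpos]
    refine mul_nonneg hα0.le ?_
    simp only [Matrix.mulVec, dotProduct]
    refine Finset.sum_nonneg fun p _ => mul_nonneg (hR0 i p) ?_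
    have hxz : ∀ j, 0 ≤ (x - z) j := fun j => by simpa using hzx j
    simp only [Pi.add_apply, kron]
    have := hd0 p.1; have := hd0 p.2; have := hxz p.1; have := hxz p.2
    positivity
  -- part (b): sum bound
  have hsumR : ∀ u : Fin n × Fin n → ℝ, ∑ i, (R.mulVec u) i = ∑ p, u p := by
    intro u
    simp only [Matrix.mulVec, dotProduct]
    rw [Finset.sum_comm]
    refine Finset.sum_congr rfl fun p _ => ?_
    rw [← Finset.sum_mul, hRcol p, one_mul]
  have hsumkron : ∀ a b : Fin n → ℝ, ∑ p, kron a b p = (∑ i, a i) * (∑ i, b i) := by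
    intro a b
    rw [Fintype.sum_prod_type, Finset.sum_mul]
    refine Finset.sum_congr rfl fun i _ => ?_
    rw [Finset.mul_sum]
    rfl
  set δ := ∑ i, d i with hδdef
  have hδ0 : 0 ≤ δ := Finset.sum_nonneg fun i _ => hd0 i
  have hδeq : δ - 2 * α * ζ * δ = -σ + α * σ ^ 2 + 1 - α := by
    have h1 := Finset.sum_congr rfl (fun i (_ : i ∈ Finset.univ) => hAd' i)
    rw [Finset.sum_sub_distrib] at h1
    rw [← Finset.mul_sum, Finset.sum_add_distrib, hsumR, hsumR] at h1
    rw [hsumkron, hsumkron] at h1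
    have h2 : ∑ i, (-(x i) + α * (R.mulVec (kron x x)) i + (1 - α) * v i)
        = -σ + α * σ ^ 2 + (1 - α) := by
      rw [Finset.sum_add_distrib, Finset.sum_add_distrib, ← Finset.mul_sum, hsumR,
        hsumkron, ← Finset.mul_sum, hv1, Finset.sum_neg_distrib]
      rw [← hσdef]
      ring
    rw [h2] at h1
    rw [← hζdef, ← hδdef] at h1
    linarith [h1]
  have hsumy : ∑ i, y i = σ + δ := by
    rw [hyd]
    simp only [Pi.add_apply]
    rw [Finset.sum_add_distrib]
  have hpos : 0 < 1 - 2 * α * ζ := by nlinarith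
  have hkey : (1 - σ - δ) * (1 - 2 * α * ζ) = α * (1 - σ) * (1 + σ - 2 * ζ) := by
    linear_combination -hδeq
  have hnn : 0 ≤ α * (1 - σ) * (1 + σ - 2 * ζ) :=
    mul_nonneg (mul_nonneg hα0.le (by linarith)) (by linarith)
  have hfin : 0 ≤ 1 - σ - δ := by
    have := (mul_nonneg_iff_of_pos_right hpos).mp (hkey ▸ hnn)
    linarith
  refine ⟨hUnit, hFy0, hx0, hxy, ?_⟩
  rw [hsumy]; linarith
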